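/- Let (Ω, ℬ, μ) be a measure space and let f, g ∈ 𝓛⁺ (i.e., ∫ min(1, f²) dμ < ∞ and similarly for g). Let a be the truncation a(u) = max(-1, min(1, u)). Then ∫_Ω |a(f+g) - a(f) - a(g)| dμ < ∞, and moreover |∫_Ω (a(f+g) - a(f) - a(g)) dμ| ≤ 3·d(f+g)² + 2·(d(f) + d(g))·d(f+g), where d(h) = (∫ min(1, h²) dμ)^{1/2}. -/

import Mathlib

open MeasureTheory
open scoped ENNReal

/-- The truncated L² size `d(h) = (∫ min(1,h²) dμ)^{1/2}`. -/
noncomputable def truncNorm {Ω : Type*} [MeasurableSpace Ω] (μ : Measure Ω)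
    (h : Ω → ℝ) : ℝ :=
  Real.sqrt (∫⁻ ω, ENNReal.ofReal (min 1 (h ω ^ 2)) ∂μ).toReal

lemma trunc_abs_le_one (t : ℝ) : |max (-1) (min 1 t)| ≤ 1 := by
  rw [abs_le]
  exact ⟨le_max_left _ _, max_le (by norm_num) (min_le_left _ _)⟩

lemma trunc_tri (x y : ℝ) :
    |max (-1) (min 1 (x+y)) - max (-1) (min 1 x) - max (-1) (min 1 y)| ≤ 3 := by
  have h1 := abs_le.1 (trunc_abs_le_one (x+y))
  have h2 := abs_le.1 (trunc_abs_le_one x)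
  have h3 := abs_le.1 (trunc_abs_le_one y)
  rw [abs_le]; constructor <;> linarith [h1.1, h1.2, h2.1, h2.2, h3.1, h3.2]

lemma trunc_small (x y : ℝ) (h : |x+y| ≤ 1) :
    |max (-1) (min 1 (x+y)) - max (-1) (min 1 x) - max (-1) (min 1 y)| ≤ 2*|x+y| := by
  rw [abs_le] at h
  rw [min_eq_right h.2, max_eq_right (by linarith : (-1:ℝ) ≤ x+y)]
  rcases abs_cases (x+y) with ⟨he,_⟩|⟨he,_⟩ <;> rw [he] <;>
    (rw [abs_le]; simp only [min_def, max_def]; split_ifs <;> constructor <;> linarith)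

lemma trunc_zero (x y : ℝ) (hx : |x| ≤ 1) (hy : |y| ≤ 1) (hxy : |x+y| ≤ 1) :
    max (-1) (min 1 (x+y)) - max (-1) (min 1 x) - max (-1) (min 1 y) = 0 := by
  rw [abs_le] at hx hy hxy
  rw [min_eq_right hx.2, max_eq_right hx.1, min_eq_right hy.2, max_eq_right hy.1,
    min_eq_right hxy.2, max_eq_right hxy.1]
  ring

lemma min_sq_add (x y : ℝ) : min 1 ((x+y)^2) ≤ 2 * min 1 (x^2) + 2 * min 1 (y^2) := by
  rcases le_total 1 (x^2) with h1|h1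
  · rw [min_eq_left h1]
    have : (0:ℝ) ≤ min 1 (y^2) := le_min (by norm_num) (sq_nonneg y)
    linarith [min_le_left 1 ((x+y)^2)]
  · rcases le_total 1 (y^2) with h2|h2
    · rw [min_eq_left h2]
      have : (0:ℝ) ≤ min 1 (x^2) := le_min (by norm_num) (sq_nonneg x)
      linarith [min_le_left 1 ((x+y)^2)]
    · rw [min_eq_right h1, min_eq_right h2]
      nlinarith [min_le_right 1 ((x+y)^2), sq_nonneg (x-y),
        le_min (by norm_num : (0:ℝ) ≤ 1) (sq_nonneg (x+y))]

lemma sq_min_abs (t : ℝ) : (min 1 |t|)^2 = min 1 (t^2) := by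
  rcases le_total 1 |t| with h|h
  · rw [min_eq_left h, min_eq_left (by nlinarith [sq_abs t])]
    norm_num
  · rw [min_eq_right h, min_eq_right (by nlinarith [sq_abs t, abs_nonneg t]), sq_abs]

/-- Cauchy–Schwarz step. -/
lemma step_cs {Ω : Type*} [MeasurableSpace Ω] (μ : Measure Ω) (F h : Ω → ℝ)
    (hFm : Measurable F) (hhm : Measurable h) :
    ∫⁻ ω, ENNReal.ofReal (min 1 |F ω|) * (if 1 < |h ω| then (1:ℝ≥0∞) else 0) ∂μ ≤
      (∫⁻ ω, ENNReal.ofReal (min 1 (F ω ^ 2)) ∂μ) ^ (1/2:ℝ) *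
      (∫⁻ ω, ENNReal.ofReal (min 1 (h ω ^ 2)) ∂μ) ^ (1/2:ℝ) := by
  have hqm : Measurable fun ω => ENNReal.ofReal (min 1 |F ω|) :=
    (measurable_const.min hFm.abs).ennreal_ofReal
  have hcm : Measurable fun ω => (if 1 < |h ω| then (1:ℝ≥0∞) else 0) :=
    Measurable.ite (measurableSet_lt measurable_const hhm.abs) measurable_const measurable_const
  have conj : Real.HolderConjugate 2 2 := Real.HolderConjugate.two_two
  calc ∫⁻ ω, ENNReal.ofReal (min 1 |F ω|) * (if 1 < |h ω| then (1:ℝ≥0∞) else 0) ∂μ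
      ≤ (∫⁻ ω, ENNReal.ofReal (min 1 |F ω|) ^ (2:ℝ) ∂μ) ^ (1/2:ℝ) *
        (∫⁻ ω, (if 1 < |h ω| then (1:ℝ≥0∞) else 0) ^ (2:ℝ) ∂μ) ^ (1/2:ℝ) :=
      ENNReal.lintegral_mul_le_Lp_mul_Lq μ conj hqm.aemeasurable hcm.aemeasurable
    _ ≤ _ := by
      gcongr with ω ω
      · apply le_of_eq
        rw [ENNReal.ofReal_rpow_of_nonneg (le_min zero_le_one (abs_nonneg _)) (by norm_num)]
        rw [show ((2:ℝ)) = ((2:ℕ):ℝ) by norm_num, Real.rpow_natCast, sq_min_abs]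
      · by_cases hh : 1 < |h ω|
        · simp only [if_pos hh, ENNReal.one_rpow]
          have : min 1 (h ω^2) = 1 := min_eq_left (by nlinarith [sq_abs (h ω)])
          simp [this]
        · simp [if_neg hh, ENNReal.zero_rpow_of_pos (by norm_num : (0:ℝ) < 2)]

theorem stmt_13 {Ω : Type*} [MeasurableSpace Ω] (μ : Measure Ω)
    (f g : Ω → ℝ) (hfm : Measurable f) (hgm : Measurable g)
    (hfi : ∫⁻ ω, ENNReal.ofReal (min 1 (f ω ^ 2)) ∂μ < ⊤)
    (hgi : ∫⁻ ω, ENNReal.ofReal (min 1 (g ω ^ 2)) ∂μ < ⊤)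
    (a : ℝ → ℝ) (ha : ∀ u, a u = max (-1) (min 1 u)) :
    Integrable (fun ω => a (f ω + g ω) - a (f ω) - a (g ω)) μ ∧
    |∫ ω, (a (f ω + g ω) - a (f ω) - a (g ω)) ∂μ| ≤
      3 * truncNorm μ (fun ω => f ω + g ω) ^ 2 +
      2 * (truncNorm μ f + truncNorm μ g) * truncNorm μ (fun ω => f ω + g ω) := by
  have haeq : a = fun u => max (-1) (min 1 u) := funext ha
  subst haeq
  simp only []
  -- abbreviations
  set Lf := ∫⁻ ω, ENNReal.ofReal (min 1 (f ω ^ 2)) ∂μ with hLf_def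
  set Lg := ∫⁻ ω, ENNReal.ofReal (min 1 (g ω ^ 2)) ∂μ with hLg_def
  set LF := ∫⁻ ω, ENNReal.ofReal (min 1 ((f ω + g ω) ^ 2)) ∂μ with hLF_def
  have hFm : Measurable fun ω => f ω + g ω := hfm.add hgm
  have ham : Measurable fun u : ℝ => max (-1) (min 1 u) :=
    measurable_const.max (measurable_const.min measurable_id)
  have hsm : Measurable fun ω =>
      max (-1) (min 1 (f ω + g ω)) - max (-1) (min 1 (f ω)) - max (-1) (min 1 (g ω)) :=
    ((ham.comp hFm).sub (ham.comp hfm)).sub (ham.comp hgm)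
  have hmFm : Measurable fun ω => ENNReal.ofReal (min 1 ((f ω + g ω) ^ 2)) :=
    (measurable_const.min (hFm.pow measurable_const)).ennreal_ofReal
  have hqm : Measurable fun ω => ENNReal.ofReal (min 1 |f ω + g ω|) :=
    (measurable_const.min hFm.abs).ennreal_ofReal
  have hcfm : Measurable fun ω => (if 1 < |f ω| then (1:ℝ≥0∞) else 0) :=
    Measurable.ite (measurableSet_lt measurable_const hfm.abs) measurable_const measurable_const
  have hcgm : Measurable fun ω => (if 1 < |g ω| then (1:ℝ≥0∞) else 0) :=
    Measurable.ite (measurableSet_lt measurable_const hgm.abs) measurable_const measurable_const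
  set s : Ω → ℝ := fun ω =>
    max (-1) (min 1 (f ω + g ω)) - max (-1) (min 1 (f ω)) - max (-1) (min 1 (g ω)) with hs_def
  have hsm' : Measurable s := hs_def ▸ hsm
  -- finiteness of LF
  have hLF_lt : LF < ⊤ := by
    have hpt : ∀ ω, ENNReal.ofReal (min 1 ((f ω + g ω) ^ 2)) ≤
        2 * ENNReal.ofReal (min 1 (f ω ^ 2)) + 2 * ENNReal.ofReal (min 1 (g ω ^ 2)) := by
      intro ω
      calc ENNReal.ofReal (min 1 ((f ω + g ω) ^ 2))
          ≤ ENNReal.ofReal (2 * min 1 (f ω ^ 2) + 2 * min 1 (g ω ^ 2)) :=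
          ENNReal.ofReal_le_ofReal (min_sq_add _ _)
        _ = 2 * ENNReal.ofReal (min 1 (f ω ^ 2)) + 2 * ENNReal.ofReal (min 1 (g ω ^ 2)) := by
          rw [ENNReal.ofReal_add (mul_nonneg two_pos.le (le_min zero_le_one (sq_nonneg _)))
                (mul_nonneg two_pos.le (le_min zero_le_one (sq_nonneg _))),
              ENNReal.ofReal_mul two_pos.le, ENNReal.ofReal_mul two_pos.le,
              ENNReal.ofReal_ofNat]
    calc LF ≤ ∫⁻ ω, (2 * ENNReal.ofReal (min 1 (f ω ^ 2)) +
          2 * ENNReal.ofReal (min 1 (g ω ^ 2))) ∂μ := lintegral_mono hpt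
      _ = 2 * Lf + 2 * Lg := by
        rw [lintegral_add_left (((measurable_const.min (hfm.pow measurable_const)).ennreal_ofReal).const_mul 2),
            lintegral_const_mul 2 ((measurable_const.min (hfm.pow measurable_const)).ennreal_ofReal),
            lintegral_const_mul 2 ((measurable_const.min (hgm.pow measurable_const)).ennreal_ofReal)]
      _ < ⊤ := by
        apply ENNReal.add_lt_top.2
        exact ⟨ENNReal.mul_lt_top (by norm_num) hfi,
               ENNReal.mul_lt_top (by norm_num) hgi⟩
  -- master pointwise bound
  have hpt : ∀ ω, ENNReal.ofReal
      (|max (-1) (min 1 (f ω + g ω)) - max (-1) (min 1 (f ω)) - max (-1) (min 1 (g ω))|) ≤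
      3 * ENNReal.ofReal (min 1 ((f ω + g ω) ^ 2)) +
      2 * (ENNReal.ofReal (min 1 |f ω + g ω|) *
        ((if 1 < |f ω| then (1:ℝ≥0∞) else 0) + (if 1 < |g ω| then (1:ℝ≥0∞) else 0))) := by
    intro ω
    rcases le_or_gt |f ω + g ω| 1 with hF1 | hF1
    · by_cases hfg : |f ω| ≤ 1 ∧ |g ω| ≤ 1
      · rw [trunc_zero _ _ hfg.1 hfg.2 hF1]
        simp
      · have hχ : (1:ℝ≥0∞) ≤ (if 1 < |f ω| then (1:ℝ≥0∞) else 0) +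
            (if 1 < |g ω| then (1:ℝ≥0∞) else 0) := by
          rw [not_and_or, not_le, not_le] at hfg
          rcases hfg with h|h
          · rw [if_pos h]; exact le_self_add
          · rw [if_pos h]; exact le_add_self
        refine le_trans ?_ le_add_self
        refine le_trans (ENNReal.ofReal_le_ofReal (trunc_small _ _ hF1)) ?_
        rw [ENNReal.ofReal_mul two_pos.le, ENNReal.ofReal_ofNat, min_eq_right hF1]
        have h2 := mul_le_mul_right hχ (ENNReal.ofReal |f ω + g ω|)
        rw [mul_one] at h2
        exact mul_le_mul_right h2 2
    · have hmF : ENNReal.ofReal (min 1 ((f ω + g ω) ^ 2)) = 1 := by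
        rw [min_eq_left (by nlinarith [sq_abs (f ω + g ω)] : (1:ℝ) ≤ (f ω + g ω)^2)]
        simp
      refine le_trans ?_ le_self_add
      refine le_trans (ENNReal.ofReal_le_ofReal (trunc_tri _ _)) ?_
      rw [hmF, mul_one]
      norm_num
  -- the main lintegral bound
  have hpt' : ∀ ω, ENNReal.ofReal |s ω| ≤
      3 * ENNReal.ofReal (min 1 ((f ω + g ω) ^ 2)) +
      2 * (ENNReal.ofReal (min 1 |f ω + g ω|) *
        ((if 1 < |f ω| then (1:ℝ≥0∞) else 0) + (if 1 < |g ω| then (1:ℝ≥0∞) else 0))) := by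
    intro ω; rw [hs_def]; exact hpt ω
  set T : ℝ≥0∞ := 3 * LF + (2 * (LF ^ (1/2:ℝ) * Lf ^ (1/2:ℝ)) +
      2 * (LF ^ (1/2:ℝ) * Lg ^ (1/2:ℝ))) with hT_def
  have hmain : ∫⁻ ω, ENNReal.ofReal |s ω| ∂μ ≤ T := by
    calc ∫⁻ ω, ENNReal.ofReal |s ω| ∂μ
        ≤ ∫⁻ ω, (3 * ENNReal.ofReal (min 1 ((f ω + g ω) ^ 2)) +
          2 * (ENNReal.ofReal (min 1 |f ω + g ω|) *
            ((if 1 < |f ω| then (1:ℝ≥0∞) else 0) + (if 1 < |g ω| then (1:ℝ≥0∞) else 0)))) ∂μ :=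
        lintegral_mono hpt'
      _ = 3 * LF + (2 * ∫⁻ ω, ENNReal.ofReal (min 1 |f ω + g ω|) *
            (if 1 < |f ω| then (1:ℝ≥0∞) else 0) ∂μ +
          2 * ∫⁻ ω, ENNReal.ofReal (min 1 |f ω + g ω|) *
            (if 1 < |g ω| then (1:ℝ≥0∞) else 0) ∂μ) := by
        rw [lintegral_add_left (hmFm.const_mul 3), lintegral_const_mul 3 hmFm]
        congr 1
        have heq : ∀ ω, 2 * (ENNReal.ofReal (min 1 |f ω + g ω|) *
            ((if 1 < |f ω| then (1:ℝ≥0∞) else 0) + (if 1 < |g ω| then (1:ℝ≥0∞) else 0))) =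
            2 * (ENNReal.ofReal (min 1 |f ω + g ω|) * (if 1 < |f ω| then (1:ℝ≥0∞) else 0)) +
            2 * (ENNReal.ofReal (min 1 |f ω + g ω|) * (if 1 < |g ω| then (1:ℝ≥0∞) else 0)) := by
          intro ω; ring
        simp_rw [heq]
        rw [lintegral_add_left (show Measurable fun ω =>
              2 * (ENNReal.ofReal (min 1 |f ω + g ω|) * (if 1 < |f ω| then (1:ℝ≥0∞) else 0))
              from (hqm.mul hcfm).const_mul 2),
            lintegral_const_mul 2 (show Measurable fun ω =>
              ENNReal.ofReal (min 1 |f ω + g ω|) * (if 1 < |f ω| then (1:ℝ≥0∞) else 0)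
              from hqm.mul hcfm),
            lintegral_const_mul 2 (show Measurable fun ω =>
              ENNReal.ofReal (min 1 |f ω + g ω|) * (if 1 < |g ω| then (1:ℝ≥0∞) else 0)
              from hqm.mul hcgm)]
      _ ≤ T := by
        rw [hT_def]
        gcongr
        · exact step_cs μ _ f hFm hfm
        · exact step_cs μ _ g hFm hgm
  have hLF_ne : LF ≠ ⊤ := hLF_lt.ne
  have h1 : LF ^ (1/2:ℝ) ≠ ⊤ := ENNReal.rpow_ne_top_of_nonneg (by norm_num) hLF_ne
  have h2 : Lf ^ (1/2:ℝ) ≠ ⊤ := ENNReal.rpow_ne_top_of_nonneg (by norm_num) hfi.ne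
  have h3 : Lg ^ (1/2:ℝ) ≠ ⊤ := ENNReal.rpow_ne_top_of_nonneg (by norm_num) hgi.ne
  have hT_ne : T ≠ ⊤ := by rw [hT_def]; finiteness
  -- integrability
  have hint : Integrable s μ := by
    refine ⟨hsm'.aestronglyMeasurable, ?_⟩
    rw [hasFiniteIntegral_iff_norm]
    simp_rw [Real.norm_eq_abs]
    exact lt_of_le_of_lt hmain (lt_top_iff_ne_top.2 hT_ne)
  refine ⟨hint, ?_⟩
  -- the integral bound
  have hb1 : |∫ ω, s ω ∂μ| ≤ ∫ ω, |s ω| ∂μ := by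
    simpa [Real.norm_eq_abs] using norm_integral_le_integral_norm (μ := μ) (f := s)
  have hb2 : ∫ ω, |s ω| ∂μ = (∫⁻ ω, ENNReal.ofReal |s ω| ∂μ).toReal :=
    integral_eq_lintegral_of_nonneg_ae (Filter.Eventually.of_forall fun ω => abs_nonneg _)
      hsm'.abs.aestronglyMeasurable
  have hb3 : (∫⁻ ω, ENNReal.ofReal |s ω| ∂μ).toReal ≤ T.toReal := ENNReal.toReal_mono hT_ne hmain
  have htR : ∀ X : ℝ≥0∞, (X ^ (1/2:ℝ)).toReal = Real.sqrt X.toReal := by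
    intro X
    rw [← ENNReal.toReal_rpow, Real.sqrt_eq_rpow]
  have hT_toReal : T.toReal = 3 * LF.toReal +
      (2 * (Real.sqrt LF.toReal * Real.sqrt Lf.toReal) +
       2 * (Real.sqrt LF.toReal * Real.sqrt Lg.toReal)) := by
    rw [hT_def]
    rw [ENNReal.toReal_add (by finiteness) (by finiteness),
      ENNReal.toReal_add (by finiteness) (by finiteness)]
    simp only [ENNReal.toReal_mul, htR, ENNReal.toReal_ofNat]
  have hteq : truncNorm μ (fun ω => f ω + g ω) = Real.sqrt LF.toReal := by
    simp only [truncNorm, hLF_def]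
  have htf : truncNorm μ f = Real.sqrt Lf.toReal := by simp only [truncNorm, hLf_def]
  have htg : truncNorm μ g = Real.sqrt Lg.toReal := by simp only [truncNorm, hLg_def]
  rw [hteq, htf, htg, Real.sq_sqrt ENNReal.toReal_nonneg]
  have hfinal : |∫ ω, s ω ∂μ| ≤ T.toReal := hb1.trans (hb2.le.trans hb3)
  rw [hT_toReal] at hfinal
  calc |∫ ω, s ω ∂μ| ≤ _ := hfinal
    _ = 3 * LF.toReal + 2 * (Real.sqrt Lf.toReal + Real.sqrt Lg.toReal) * Real.sqrt LF.toReal := by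
      ring
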